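/- Fix 0 < ε < 1/2 and define ℓ: ℝ → ℝ by ℓ(−1/2) = 0 and ℓ'(x) = (ε − |x|)⁺/ε². Then ℓ(x − ε) ≤ 1(x ≥ 0) ≤ ℓ(x + ε) for all x, the functional D(ℓ) = (∫_{−1}^{2} [ ∫_0^1 (ℓ'(t−y))² dy − (∫_0^1 ℓ'(t−y) dy)² ] dt)^{1/2} satisfies D(ℓ) ≤ √(2/ε), and sup_t |∫_0^1 ℓ(t−y) dy − ∫_0^1 1(t−y ≥ 0) dy| ≤ ε. -/

import Mathlib

open Filter MeasureTheory

noncomputable def mollPhi (ε : ℝ) : ℝ → ℝ := fun x => max (ε - |x|) 0 / ε ^ 2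

lemma mollPhi_apply (ε x : ℝ) : mollPhi ε x = max (ε - |x|) 0 / ε ^ 2 := rfl

lemma mollPhi_cont (ε : ℝ) : Continuous (mollPhi ε) :=
  ((continuous_const.sub continuous_abs).max continuous_const).div_const _

lemma mollPhi_intInt (ε a b : ℝ) : IntervalIntegrable (mollPhi ε) volume a b :=
  (mollPhi_cont ε).intervalIntegrable a b

lemma mollPhi_nonneg (ε : ℝ) (x : ℝ) : 0 ≤ mollPhi ε x :=
  div_nonneg (le_max_right _ _) (sq_nonneg ε)

lemma mollPhi_le (ε : ℝ) (hε0 : 0 < ε) (x : ℝ) : mollPhi ε x ≤ 1 / ε := by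
  have h1 : max (ε - |x|) 0 ≤ ε := max_le (by linarith [abs_nonneg x]) hε0.le
  calc mollPhi ε x ≤ ε / ε ^ 2 := by
        rw [mollPhi_apply]; gcongr
    _ = 1 / ε := by field_simp

lemma mollPhi_zero (ε : ℝ) (x : ℝ) (hx : ε ≤ |x|) : mollPhi ε x = 0 := by
  rw [mollPhi_apply, max_eq_right (by linarith), zero_div]

lemma mollPhi_int_zero_neg (ε a b : ℝ) (ha : a ≤ -ε) (hb : b ≤ -ε) :
    ∫ u in a..b, mollPhi ε u = 0 := by
  rw [intervalIntegral.integral_congr (g := fun _ => (0 : ℝ))]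
  · simp
  · intro u hu
    have hu' : u ≤ -ε := le_trans hu.2 (max_le ha hb)
    exact mollPhi_zero ε u (le_trans (by linarith) (neg_le_abs u))

lemma mollPhi_int_zero_pos (ε a b : ℝ) (ha : ε ≤ a) (hb : ε ≤ b) :
    ∫ u in a..b, mollPhi ε u = 0 := by
  rw [intervalIntegral.integral_congr (g := fun _ => (0 : ℝ))]
  · simp
  · intro u hu
    have hu' : ε ≤ u := le_trans (le_min ha hb) hu.1
    exact mollPhi_zero ε u (le_trans hu' (le_abs_self u))

section mollL

variable {ε : ℝ} {ℓ : ℝ → ℝ}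

lemma moll_ftc (hderiv : ∀ x : ℝ, HasDerivAt ℓ (mollPhi ε x) x) (a b : ℝ) :
    ∫ u in a..b, mollPhi ε u = ℓ b - ℓ a :=
  intervalIntegral.integral_eq_sub_of_hasDerivAt (fun x _ => hderiv x) (mollPhi_intInt ε a b)

lemma moll_A (hε0 : 0 < ε) (hε : ε < 1 / 2) (hbase : ℓ (-(1 / 2)) = 0)
    (hderiv : ∀ x : ℝ, HasDerivAt ℓ (mollPhi ε x) x) {u : ℝ} (h1 : -ε ≤ u) (h2 : u ≤ 0) :
    ℓ u = (ε + u) ^ 2 / (2 * ε ^ 2) := by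
  have e1 : ℓ u = ∫ v in (-(1/2) : ℝ)..u, mollPhi ε v := by
    rw [moll_ftc hderiv, hbase, sub_zero]
  have hsplit := intervalIntegral.integral_add_adjacent_intervals
    (a := -(1/2)) (b := -ε) (c := u) (mollPhi_intInt ε _ _) (mollPhi_intInt ε _ _)
  have z1 : ∫ v in (-(1/2) : ℝ)..(-ε), mollPhi ε v = 0 :=
    mollPhi_int_zero_neg ε _ _ (by linarith) le_rfl
  have e2 : ∫ v in (-ε : ℝ)..u, mollPhi ε v = (ε + u) ^ 2 / (2 * ε ^ 2) := by
    have key : ∀ v ∈ Set.uIcc (-ε) u,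
        HasDerivAt (fun w => (ε + w) ^ 2 / (2 * ε ^ 2)) (mollPhi ε v) v := by
      intro v hv
      rw [Set.uIcc_of_le h1] at hv
      have hv1 : -ε ≤ v := hv.1
      have hv2 : v ≤ 0 := le_trans hv.2 h2
      have hd : HasDerivAt (fun w => (ε + w) ^ 2 / (2 * ε ^ 2))
          ((2 : ℕ) * (ε + v) ^ (2 - 1) * 1 / (2 * ε ^ 2)) v :=
        ((((hasDerivAt_id v).const_add ε)).pow 2).div_const _
      convert hd using 1
      rw [mollPhi_apply, abs_of_nonpos hv2, max_eq_left (by linarith)]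
      push_cast
      field_simp
      ring
    rw [intervalIntegral.integral_eq_sub_of_hasDerivAt key (mollPhi_intInt ε _ _)]
    rw [show ε + -ε = 0 by ring]
    norm_num
  rw [e1, ← hsplit, z1, e2, zero_add]

lemma moll_B (hε0 : 0 < ε) (hε : ε < 1 / 2) (hbase : ℓ (-(1 / 2)) = 0)
    (hderiv : ∀ x : ℝ, HasDerivAt ℓ (mollPhi ε x) x) {u : ℝ} (h1 : 0 ≤ u) (h2 : u ≤ ε) :
    ℓ u = 1 - (ε - u) ^ 2 / (2 * ε ^ 2) := by
  have hL0 : ℓ 0 = 1 / 2 := by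
    rw [moll_A hε0 hε hbase hderiv (by linarith) le_rfl]
    field_simp
    ring
  have e1 : ∫ v in (0 : ℝ)..u, mollPhi ε v = ℓ u - ℓ 0 := moll_ftc hderiv 0 u
  have e2 : ∫ v in (0 : ℝ)..u, mollPhi ε v = -((ε - u) ^ 2 / (2 * ε ^ 2)) + ε ^ 2 / (2 * ε ^ 2) := by
    have key : ∀ v ∈ Set.uIcc (0 : ℝ) u,
        HasDerivAt (fun w => -((ε - w) ^ 2 / (2 * ε ^ 2))) (mollPhi ε v) v := by
      intro v hv
      rw [Set.uIcc_of_le h1] at hv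
      have hv1 : 0 ≤ v := hv.1
      have hv2 : v ≤ ε := le_trans hv.2 h2
      have hd : HasDerivAt (fun w => -((ε - w) ^ 2 / (2 * ε ^ 2)))
          (-((2 : ℕ) * (ε - v) ^ (2 - 1) * -1 / (2 * ε ^ 2))) v :=
        (((((hasDerivAt_id v).const_sub ε)).pow 2).div_const _).neg
      convert hd using 1
      rw [mollPhi_apply, abs_of_nonneg hv1, max_eq_left (by linarith)]
      push_cast
      field_simp
    rw [intervalIntegral.integral_eq_sub_of_hasDerivAt key (mollPhi_intInt ε _ _)]
    rw [show ε - (0:ℝ) = ε by ring]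
    ring
  have hhalf : ε ^ 2 / (2 * ε ^ 2) = 1 / 2 := by field_simp
  rw [e1] at e2
  rw [hL0] at e2
  rw [hhalf] at e2
  linarith

lemma moll_zero (hε0 : 0 < ε) (hε : ε < 1 / 2) (hbase : ℓ (-(1 / 2)) = 0)
    (hderiv : ∀ x : ℝ, HasDerivAt ℓ (mollPhi ε x) x) {u : ℝ} (hu : u ≤ -ε) : ℓ u = 0 := by
  have e1 : ∫ v in u..(-ε), mollPhi ε v = ℓ (-ε) - ℓ u := moll_ftc hderiv u (-ε)
  have z1 : ∫ v in u..(-ε), mollPhi ε v = 0 := mollPhi_int_zero_neg ε _ _ hu le_rfl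
  have e2 : ℓ (-ε) = 0 := by
    rw [moll_A hε0 hε hbase hderiv le_rfl (by linarith)]
    rw [show ε + -ε = 0 by ring]
    norm_num
  rw [z1, e2] at e1
  linarith

lemma moll_one (hε0 : 0 < ε) (hε : ε < 1 / 2) (hbase : ℓ (-(1 / 2)) = 0)
    (hderiv : ∀ x : ℝ, HasDerivAt ℓ (mollPhi ε x) x) {u : ℝ} (hu : ε ≤ u) : ℓ u = 1 := by
  have e1 : ∫ v in (ε : ℝ)..u, mollPhi ε v = ℓ u - ℓ ε := moll_ftc hderiv ε u
  have z1 : ∫ v in (ε : ℝ)..u, mollPhi ε v = 0 := mollPhi_int_zero_pos ε _ _ le_rfl hu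
  have e2 : ℓ ε = 1 := by
    rw [moll_B hε0 hε hbase hderiv hε0.le le_rfl]
    norm_num
  rw [z1, e2] at e1
  linarith

lemma moll_mono (hderiv : ∀ x : ℝ, HasDerivAt ℓ (mollPhi ε x) x) : Monotone ℓ :=
  monotone_of_hasDerivAt_nonneg hderiv fun x => mollPhi_nonneg ε x

lemma moll_mem (hε0 : 0 < ε) (hε : ε < 1 / 2) (hbase : ℓ (-(1 / 2)) = 0)
    (hderiv : ∀ x : ℝ, HasDerivAt ℓ (mollPhi ε x) x) (u : ℝ) : 0 ≤ ℓ u ∧ ℓ u ≤ 1 := by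
  constructor
  · rw [← moll_zero hε0 hε hbase hderiv (min_le_right u (-ε))]
    exact moll_mono hderiv (min_le_left _ _)
  · rw [← moll_one hε0 hε hbase hderiv (le_max_right u ε)]
    exact moll_mono hderiv (le_max_left _ _)

lemma moll_pointwise (hε0 : 0 < ε) (hε : ε < 1 / 2) (hbase : ℓ (-(1 / 2)) = 0)
    (hderiv : ∀ x : ℝ, HasDerivAt ℓ (mollPhi ε x) x) (u : ℝ) :
    |ℓ u - (if 0 ≤ u then (1 : ℝ) else 0)| ≤ ε / 2 * mollPhi ε u := by
  have hφ0 := mollPhi_nonneg ε u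
  rcases le_or_gt u (-ε) with h | h
  · rw [moll_zero hε0 hε hbase hderiv h, if_neg (by intro hc; linarith), sub_zero, abs_zero]
    positivity
  rcases le_or_gt ε u with h2 | h2
  · rw [moll_one hε0 hε hbase hderiv h2, if_pos (by linarith), sub_self, abs_zero]
    positivity
  rcases lt_or_ge u 0 with h3 | h3
  · rw [if_neg (not_le.2 h3), sub_zero, moll_A hε0 hε hbase hderiv h.le h3.le,
      abs_of_nonneg (by positivity), mollPhi_apply, abs_of_nonpos h3.le,
      max_eq_left (by linarith)]
    have h4 : (0:ℝ) ≤ ε + u := by linarith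
    have h5 : (ε + u) ^ 2 ≤ ε * (ε + u) := by nlinarith
    calc (ε + u) ^ 2 / (2 * ε ^ 2) ≤ ε * (ε + u) / (2 * ε ^ 2) := by gcongr
      _ = ε / 2 * ((ε - -u) / ε ^ 2) := by field_simp; ring
  · rw [if_pos h3, moll_B hε0 hε hbase hderiv h3 h2.le, mollPhi_apply,
      abs_of_nonneg h3, max_eq_left (by linarith)]
    rw [show (1 : ℝ) - (ε - u) ^ 2 / (2 * ε ^ 2) - 1 = -((ε - u) ^ 2 / (2 * ε ^ 2)) by ring,
      abs_neg, abs_of_nonneg (by positivity)]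
    have h4 : (0:ℝ) ≤ ε - u := by linarith
    have h5 : (ε - u) ^ 2 ≤ ε * (ε - u) := by nlinarith
    calc (ε - u) ^ 2 / (2 * ε ^ 2) ≤ ε * (ε - u) / (2 * ε ^ 2) := by gcongr
      _ = ε / 2 * ((ε - u) / ε ^ 2) := by field_simp

end mollL

/-- for `0 < ε < 1/2` and `ℓ` with `ℓ(-1/2) = 0` and
`ℓ'(x) = (ε - |x|)⁺/ε²`, one has the squeeze `ℓ(x-ε) ≤ 1(x ≥ 0) ≤ ℓ(x+ε)`, the bound
`D(ℓ) ≤ √(2/ε)`, and `sup_t |∫_0^1 ℓ(t-y) dy - ∫_0^1 1(t-y ≥ 0) dy| ≤ ε`. -/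
theorem mollifier_properties (ε : ℝ) (hε0 : 0 < ε) (hε : ε < 1 / 2) (ℓ : ℝ → ℝ)
    (hbase : ℓ (-(1 / 2)) = 0)
    (hderiv : ∀ x : ℝ, HasDerivAt ℓ (max (ε - |x|) 0 / ε ^ 2) x) :
    (∀ x : ℝ, ℓ (x - ε) ≤ (if 0 ≤ x then (1 : ℝ) else 0)) ∧
    (∀ x : ℝ, (if 0 ≤ x then (1 : ℝ) else 0) ≤ ℓ (x + ε)) ∧
    Real.sqrt (∫ t in (-1 : ℝ)..2,
        ((∫ y in (0 : ℝ)..1, (max (ε - |t - y|) 0 / ε ^ 2) ^ 2) -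
          (∫ y in (0 : ℝ)..1, max (ε - |t - y|) 0 / ε ^ 2) ^ 2)) ≤
      Real.sqrt (2 / ε) ∧
    ∀ t : ℝ, |(∫ y in (0 : ℝ)..1, ℓ (t - y)) -
        ∫ y in (0 : ℝ)..1, (if 0 ≤ t - y then (1 : ℝ) else 0)| ≤ ε := by
  have hderiv' : ∀ x : ℝ, HasDerivAt ℓ (mollPhi ε x) x := hderiv
  have hmem := moll_mem hε0 hε hbase hderiv'
  have diffℓ : Differentiable ℝ ℓ := fun x => (hderiv' x).differentiableAt
  have contℓ : Continuous ℓ := diffℓ.continuous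
  refine ⟨?_, ?_, ?_, ?_⟩
  · intro x
    by_cases hx : 0 ≤ x
    · rw [if_pos hx]; exact (hmem (x - ε)).2
    · rw [if_neg hx]
      rw [moll_zero hε0 hε hbase hderiv' (by push_neg at hx; linarith)]
  · intro x
    by_cases hx : 0 ≤ x
    · rw [if_pos hx, moll_one hε0 hε hbase hderiv' (by linarith)]
    · rw [if_neg hx]; exact (hmem (x + ε)).1
  · -- variance bound
    apply Real.sqrt_le_sqrt
    simp only [← mollPhi_apply]
    have sqint : ∀ a b : ℝ, IntervalIntegrable (fun v => (mollPhi ε v) ^ 2) volume a b :=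
      fun a b => ((mollPhi_cont ε).pow 2).intervalIntegrable a b
    have key : ∀ t : ℝ,
        ((∫ y in (0:ℝ)..1, (mollPhi ε (t - y)) ^ 2) - (∫ y in (0:ℝ)..1, mollPhi ε (t - y)) ^ 2)
        = (((∫ v in (0:ℝ)..t, (mollPhi ε v) ^ 2) - ∫ v in (0:ℝ)..(t - 1), (mollPhi ε v) ^ 2)
            - (ℓ t - ℓ (t - 1)) ^ 2) := by
      intro t
      congr 1
      · rw [intervalIntegral.integral_comp_sub_left (fun u => (mollPhi ε u) ^ 2) t, sub_zero,
          ← intervalIntegral.integral_interval_sub_left (sqint 0 t) (sqint 0 (t - 1))]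
      · rw [intervalIntegral.integral_comp_sub_left (mollPhi ε) t, sub_zero,
          moll_ftc hderiv']
    rw [intervalIntegral.integral_congr (g := fun t =>
        (((∫ v in (0:ℝ)..t, (mollPhi ε v) ^ 2) - ∫ v in (0:ℝ)..(t - 1), (mollPhi ε v) ^ 2)
          - (ℓ t - ℓ (t - 1)) ^ 2)) (fun t _ => key t)]
    have cont1 : Continuous (fun t : ℝ => ∫ v in (0:ℝ)..t, (mollPhi ε v) ^ 2) :=
      intervalIntegral.continuous_primitive (fun a b => sqint a b) 0
    have contI : Continuous (fun t : ℝ =>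
        (((∫ v in (0:ℝ)..t, (mollPhi ε v) ^ 2) - ∫ v in (0:ℝ)..(t - 1), (mollPhi ε v) ^ 2)
          - (ℓ t - ℓ (t - 1)) ^ 2)) := by
      have c2 : Continuous (fun t : ℝ => t - 1) := continuous_id.sub continuous_const
      exact ((cont1.sub (cont1.comp c2)).sub ((contℓ.sub (contℓ.comp c2)).pow 2))
    have contg : Continuous (fun t : ℝ => (ℓ t - ℓ (t - 1)) / ε) :=
      (contℓ.sub (contℓ.comp (continuous_id.sub continuous_const))).div_const ε
    calc (∫ t in (-1:ℝ)..2,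
          (((∫ v in (0:ℝ)..t, (mollPhi ε v) ^ 2) - ∫ v in (0:ℝ)..(t - 1), (mollPhi ε v) ^ 2)
            - (ℓ t - ℓ (t - 1)) ^ 2))
        ≤ ∫ t in (-1:ℝ)..2, (ℓ t - ℓ (t - 1)) / ε := by
          apply intervalIntegral.integral_mono_on (by norm_num)
            (contI.intervalIntegrable _ _) (contg.intervalIntegrable _ _)
          intro t _
          have h1 : (∫ v in (0:ℝ)..t, (mollPhi ε v) ^ 2) - ∫ v in (0:ℝ)..(t - 1), (mollPhi ε v) ^ 2
              ≤ (ℓ t - ℓ (t - 1)) / ε := by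
            rw [intervalIntegral.integral_interval_sub_left (sqint 0 t) (sqint 0 (t - 1))]
            have hle : ∫ v in (t - 1)..t, (mollPhi ε v) ^ 2
                ≤ ∫ v in (t - 1)..t, mollPhi ε v * (1 / ε) := by
              apply intervalIntegral.integral_mono_on (by linarith) (sqint _ _)
                (((mollPhi_cont ε).mul continuous_const).intervalIntegrable _ _)
              intro v _
              have ha := mollPhi_le ε hε0 v
              have hb := mollPhi_nonneg ε v
              calc (mollPhi ε v) ^ 2 = mollPhi ε v * mollPhi ε v := sq (mollPhi ε v) ▸ rfl
                _ ≤ mollPhi ε v * (1 / ε) := by gcongr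
            rw [intervalIntegral.integral_mul_const, moll_ftc hderiv'] at hle
            calc ∫ v in (t - 1)..t, (mollPhi ε v) ^ 2 ≤ (ℓ t - ℓ (t - 1)) * (1 / ε) := hle
              _ = (ℓ t - ℓ (t - 1)) / ε := by ring
          nlinarith [sq_nonneg (ℓ t - ℓ (t - 1))]
      _ = ((∫ t in (-1:ℝ)..2, ℓ t) - ∫ t in (-1:ℝ)..2, ℓ (t - 1)) / ε := by
          have hint2 : IntervalIntegrable (fun t : ℝ => ℓ (t - 1)) volume (-1) 2 :=
            (contℓ.comp (continuous_id.sub continuous_const)).intervalIntegrable _ _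
          rw [← intervalIntegral.integral_sub (contℓ.intervalIntegrable _ _) hint2,
            ← intervalIntegral.integral_div]
      _ ≤ 2 / ε := by
          have hshift : (∫ t in (-1:ℝ)..2, ℓ (t - 1)) = ∫ t in (-2:ℝ)..1, ℓ t := by
            rw [intervalIntegral.integral_comp_sub_right ℓ 1]
            norm_num
          have hsplit1 : (∫ t in (-1:ℝ)..2, ℓ t)
              = (∫ t in (-1:ℝ)..1, ℓ t) + ∫ t in (1:ℝ)..2, ℓ t :=
            (intervalIntegral.integral_add_adjacent_intervals
              (contℓ.intervalIntegrable _ _) (contℓ.intervalIntegrable _ _)).symm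
          have hsplit2 : (∫ t in (-2:ℝ)..1, ℓ t)
              = (∫ t in (-2:ℝ)..(-1), ℓ t) + ∫ t in (-1:ℝ)..1, ℓ t :=
            (intervalIntegral.integral_add_adjacent_intervals
              (contℓ.intervalIntegrable _ _) (contℓ.intervalIntegrable _ _)).symm
          have h12 : (∫ t in (1:ℝ)..2, ℓ t) = 1 := by
            rw [intervalIntegral.integral_congr (g := fun _ => (1 : ℝ))]
            · simp
              norm_num
            · intro u hu
              have : (1:ℝ) ≤ u := le_trans (by norm_num [Set.uIcc_of_le]) hu.1
              exact moll_one hε0 hε hbase hderiv' (by linarith)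
          have hm21 : (∫ t in (-2:ℝ)..(-1), ℓ t) = 0 := by
            rw [intervalIntegral.integral_congr (g := fun _ => (0 : ℝ))]
            · simp
            · intro u hu
              have : u ≤ (-1:ℝ) := le_trans hu.2 (by norm_num)
              exact moll_zero hε0 hε hbase hderiv' (by linarith)
          rw [hshift, hsplit1, hsplit2, h12, hm21]
          rw [show (∫ t in (-1:ℝ)..1, ℓ t) + 1 - (0 + ∫ t in (-1:ℝ)..1, ℓ t) = 1 by ring]
          gcongr
          norm_num
  · -- sup bound
    intro t
    have hχint : IntervalIntegrable (fun y => if 0 ≤ t - y then (1:ℝ) else 0) volume 0 1 := by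
      apply Antitone.intervalIntegrable
      intro a b hab
      dsimp only
      by_cases hb : 0 ≤ t - b
      · rw [if_pos hb, if_pos (by linarith)]
      · rw [if_neg hb]
        split_ifs <;> norm_num
    have hℓyint : IntervalIntegrable (fun y => ℓ (t - y)) volume 0 1 :=
      (contℓ.comp (continuous_const.sub continuous_id)).intervalIntegrable _ _
    have hφyint : IntervalIntegrable (fun y => ε / 2 * mollPhi ε (t - y)) volume 0 1 :=
      (continuous_const.mul ((mollPhi_cont ε).comp (continuous_const.sub continuous_id))).intervalIntegrable _ _
    rw [← intervalIntegral.integral_sub hℓyint hχint]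
    calc |∫ y in (0:ℝ)..1, (ℓ (t - y) - if 0 ≤ t - y then (1:ℝ) else 0)|
        ≤ ∫ y in (0:ℝ)..1, |ℓ (t - y) - if 0 ≤ t - y then (1:ℝ) else 0| :=
          intervalIntegral.abs_integral_le_integral_abs (by norm_num)
      _ ≤ ∫ y in (0:ℝ)..1, ε / 2 * mollPhi ε (t - y) := by
          apply intervalIntegral.integral_mono_on (by norm_num)
            ((hℓyint.sub hχint).abs) hφyint
          intro y _
          exact moll_pointwise hε0 hε hbase hderiv' (t - y)
      _ = ε / 2 * (ℓ t - ℓ (t - 1)) := by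
          rw [intervalIntegral.integral_const_mul,
            intervalIntegral.integral_comp_sub_left (mollPhi ε) t, sub_zero, moll_ftc hderiv']
      _ ≤ ε := by
          have h1 := (hmem t).2
          have h2 := (hmem (t - 1)).1
          nlinarith
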